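/- Any randomized committee rule that (a) outputs committees of size at most k, and (b) satisfies justified representation ex post, must have continuity (maximum change in a candidate's selection probability under adding a single approval) at least k²/(n(k+1)) ≥ Ω(k/n). Concretely: on the instance with k+1 candidates each approved by n/k − n/k² voters, some candidate c* has Pr[c* selected] ≤ k/(k+1); after adding n/k² approvals for c* (making it approved by exactly n/k voters, each approving only c*), JR forces Pr[c* selected] = 1; hence some single approval change shifts c*'s probability by at least (1/(k+1))/(n/k²) = k²/(n(k+1)). -/

import Mathlib

/-- Continuity lower bound for JR rules: any randomized committee rule `f`
(given by its selection probabilities) which outputs committees of size at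
most `k` (so `∑ c, f A c ≤ k`) and which satisfies justified representation
ex post (here instantiated: whenever at least `n/k` voters approve exactly
the single candidate `c`, we must have `f A c = 1`), admits two approval
profiles differing by a single approval of a single voter on which some
candidate's selection probability changes by at least `k²/(n(k+1))`. -/
theorem stmt_9 (n k : ℕ) (hk : 0 < k) (hn : 0 < n) (hdvd : k ^ 2 ∣ n)
    {C : Type*} [Fintype C] [DecidableEq C] (hC : Fintype.card C = k + 1)
    {V : Type*} [Fintype V] [DecidableEq V] (hV : Fintype.card V = n)
    (f : (V → Finset C) → C → ℝ)
    (hf0 : ∀ A c, 0 ≤ f A c) (hf1 : ∀ A c, f A c ≤ 1)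
    (hfk : ∀ A, ∑ c, f A c ≤ (k : ℝ))
    (hJR : ∀ (A : V → Finset C) (c : C),
      n / k ≤ (Finset.univ.filter (fun v => A v = {c})).card → f A c = 1) :
    ∃ (A A' : V → Finset C) (v : V) (c : C),
      (∀ w, w ≠ v → A' w = A w) ∧
      (∃ d, d ∉ A v ∧ A' v = insert d (A v)) ∧
      (k : ℝ) ^ 2 / (n * (k + 1)) ≤ |f A' c - f A c| := by
  classical
  obtain ⟨q, hq⟩ := hdvd
  obtain ⟨k0, rfl⟩ : ∃ k0, k = k0 + 1 := ⟨k - 1, by omega⟩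
  have hq0 : 0 < q := by
    rcases Nat.eq_zero_or_pos q with h | h
    · subst h; simp at hq; omega
    · exact h
  -- basic objects
  have hC' : Fintype.card C = k0 + 2 := by omega
  let e : V ≃ Fin n := Fintype.equivFinOfCardEq hV
  let dC : C ≃ Fin (k0 + 2) := Fintype.equivFinOfCardEq hC'
  set s : ℕ := k0 * q with hs
  obtain ⟨X, hX⟩ : ∃ X, X = (k0 + 2) * s := ⟨_, rfl⟩
  have hsum : X + q = n := by rw [hX, hs, hq]; ring
  have hdiv : n / (k0 + 1) = (k0 + 1) * q := by
    rw [hq, pow_two, mul_assoc, Nat.mul_div_cancel_left _ (by omega : 0 < k0 + 1)]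
  let cand : ℕ → C := fun j => dC.symm ⟨min j (k0 + 1), by omega⟩
  let A0 : V → Finset C := fun v => if (e v : ℕ) < X then {cand ((e v : ℕ) / s)} else ∅
  -- pick the candidate with small probability
  obtain ⟨cstar, hcstar⟩ : ∃ c : C, f A0 c ≤ (k0 + 1 : ℝ) / (k0 + 2) := by
    by_contra hcon
    push_neg at hcon
    have hne : (Finset.univ : Finset C).Nonempty :=
      Finset.univ_nonempty_iff.mpr (Fintype.card_pos_iff.mp (by omega))
    have h2 : ∑ _c : C, ((k0 + 1 : ℝ) / (k0 + 2)) < ∑ c, f A0 c :=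
      Finset.sum_lt_sum_of_nonempty hne (fun c _ => hcon c)
    rw [Finset.sum_const, Finset.card_univ, hC'] at h2
    have h3 := hfk A0
    have h4 : (k0 + 2) • ((k0 + 1 : ℝ) / (k0 + 2)) = (k0 + 1 : ℝ) := by
      rw [nsmul_eq_mul]
      have h5 : ((k0 : ℝ) + 2) ≠ 0 := by positivity
      push_cast
      field_simp
    rw [h4] at h2
    push_cast at h3
    linarith
  -- the profiles
  let B : ℕ → V → Finset C := fun j v =>
    if (e v : ℕ) < X then A0 v
    else if (e v : ℕ) < X + j then {cstar} else ∅
  have hB0 : B 0 = A0 := by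
    funext v
    by_cases h : (e v : ℕ) < X
    · simp [B, h]
    · simp [B, A0, h]
  -- steps
  have hstep : ∀ j, j < q → ∃ (v : V), (∀ w, w ≠ v → B (j+1) w = B j w) ∧
      (cstar ∉ B j v ∧ B (j+1) v = insert cstar (B j v)) := by
    intro j hj
    have hjn : X + j < n := by omega
    refine ⟨e.symm ⟨X + j, hjn⟩, ?_, ?_, ?_⟩
    · intro w hw
      have hne : (e w : ℕ) ≠ X + j := by
        intro hcon
        apply hw
        rw [← e.symm_apply_apply w]
        congr 1
        exact Fin.ext hcon
      simp only [B]
      by_cases h1 : (e w : ℕ) < X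
      · simp [h1]
      · rw [if_neg h1, if_neg h1]
        by_cases h2 : (e w : ℕ) < X + j
        · rw [if_pos h2, if_pos (by omega)]
        · rw [if_neg h2, if_neg (by omega)]
    · simp [B, e.apply_symm_apply]
    · simp [B, e.apply_symm_apply]
  -- JR at B q
  have hfq : f (B q) cstar = 1 := by
    apply hJR
    rw [hdiv]
    set i : Fin (k0 + 2) := dC cstar with hi
    have hXn : X ≤ n := by omega
    have hi1s : ((i : ℕ) + 1) * s ≤ X := by
      rw [hX]
      exact Nat.mul_le_mul_right s (by omega)
    have hiss : (i : ℕ) * s + s = ((i : ℕ) + 1) * s := by ring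
    let U : Finset ℕ := Finset.Ico ((i : ℕ) * s) ((i : ℕ) * s + s) ∪ Finset.Ico X n
    have hUcard : U.card = (k0 + 1) * q := by
      have hdisj : Disjoint (Finset.Ico ((i : ℕ) * s) ((i : ℕ) * s + s)) (Finset.Ico X n) := by
        rw [Finset.disjoint_left]
        intro m hm hm'
        have h1 := (Finset.mem_Ico.mp hm).2
        have h2 := (Finset.mem_Ico.mp hm').1
        omega
      rw [Finset.card_union_of_disjoint hdisj, Nat.card_Ico, Nat.card_Ico]
      have hkq : (k0 + 1) * q = s + q := by rw [hs]; ring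
      omega
    rw [← hUcard]
    apply Finset.card_le_card_of_injOn (fun m => e.symm ⟨m % n, Nat.mod_lt _ hn⟩)
    · intro m hm
      have hmn : m < n := by
        rcases Finset.mem_union.mp hm with h | h
        · have := (Finset.mem_Ico.mp h).2; omega
        · exact (Finset.mem_Ico.mp h).2
      simp only [Finset.mem_coe, Finset.mem_filter, Finset.mem_univ, true_and]
      have hev : (e (e.symm ⟨m % n, Nat.mod_lt _ hn⟩) : ℕ) = m := by
        simp [Nat.mod_eq_of_lt hmn]
      rcases Finset.mem_union.mp hm with h | h
      · obtain ⟨hlo, hhi⟩ := Finset.mem_Ico.mp h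
        have hmX : m < X := by omega
        have hds : m / s = (i : ℕ) := Nat.div_eq_of_lt_le hlo (by omega)
        have hcs : cand (m / s) = cstar := by
          have hmin : min (m / s) (k0 + 1) = (i : ℕ) := by
            rw [hds]; exact Nat.min_eq_left (by omega)
          show dC.symm ⟨min (m / s) (k0 + 1), _⟩ = cstar
          have : (⟨min (m / s) (k0 + 1), by omega⟩ : Fin (k0 + 2)) = i := Fin.ext hmin
          rw [this, hi, dC.symm_apply_apply]
        simp only [B, A0, hev, if_pos hmX, hcs]
      · obtain ⟨hlo, hhi⟩ := Finset.mem_Ico.mp h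
        simp only [B, hev, if_neg (by omega : ¬ m < X), if_pos (by omega : m < X + q)]
    · intro a ha b hb hab
      have haa : a < n := by
        rcases Finset.mem_union.mp ha with h | h
        · have := (Finset.mem_Ico.mp h).2; omega
        · exact (Finset.mem_Ico.mp h).2
      have hbb : b < n := by
        rcases Finset.mem_union.mp hb with h | h
        · have := (Finset.mem_Ico.mp h).2; omega
        · exact (Finset.mem_Ico.mp h).2
      have := congrArg (fun v => (e v : ℕ)) hab
      simpa [Nat.mod_eq_of_lt haa, Nat.mod_eq_of_lt hbb] using this
  -- conclude by contradiction
  by_contra hcon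
  push_neg at hcon
  set δ : ℝ := ((k0 : ℝ) + 1) ^ 2 / (n * ((k0 : ℝ) + 1 + 1)) with hδ
  have hlt : ∀ j ∈ Finset.range q,
      |f (B (j+1)) cstar - f (B j) cstar| < δ := by
    intro j hj
    obtain ⟨v, hv1, hv2, hv3⟩ := hstep j (Finset.mem_range.mp hj)
    have := hcon (B j) (B (j+1)) v cstar hv1 ⟨cstar, hv2, hv3⟩
    rw [hδ]
    push_cast at this ⊢
    convert this using 2
  have htel : f (B q) cstar - f (B 0) cstar
      = ∑ j ∈ Finset.range q, (f (B (j+1)) cstar - f (B j) cstar) :=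
    (Finset.sum_range_sub (fun j => f (B j) cstar) q).symm
  have habs : |f (B q) cstar - f (B 0) cstar| < q * δ := by
    calc |f (B q) cstar - f (B 0) cstar|
        ≤ ∑ j ∈ Finset.range q, |f (B (j+1)) cstar - f (B j) cstar| := by
          rw [htel]; exact Finset.abs_sum_le_sum_abs _ _
      _ < ∑ _j ∈ Finset.range q, δ :=
          Finset.sum_lt_sum_of_nonempty (Finset.nonempty_range_iff.mpr (by omega)) hlt
      _ = q * δ := by rw [Finset.sum_const, Finset.card_range, nsmul_eq_mul]
  have hqδ : (q : ℝ) * δ = 1 / ((k0 : ℝ) + 2) := by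
    rw [hδ]
    have hnR : (n : ℝ) = ((k0 : ℝ) + 1) ^ 2 * q := by
      rw [hq]; push_cast; ring
    rw [hnR]
    have hq0' : (0 : ℝ) < q := by exact_mod_cast hq0
    have hk1 : ((k0 : ℝ) + 1) ≠ 0 := by positivity
    field_simp
    ring
  rw [hqδ] at habs
  rw [hB0, hfq] at habs
  have h1 : 1 - f A0 cstar ≤ |1 - f A0 cstar| := le_abs_self _
  have hk2 : (0 : ℝ) < (k0 : ℝ) + 2 := by positivity
  have hcf : 1 - f A0 cstar ≥ 1 / ((k0 : ℝ) + 2) := by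
    have : (k0 + 1 : ℝ) / (k0 + 2) = 1 - 1 / ((k0 : ℝ) + 2) := by field_simp; ring
    rw [this] at hcstar
    linarith
  linarith
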